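/- arXiv:2312.17691 — 3 statements merged into one kernel-verified Lean document; each statement's English description precedes it below -/
import Mathlib

section
/- For each integer k ≥ 1, define φ_k : ℝ → ℝ by φ_k(x) = ln(1 + |x|³(3x²/(5k²) − 3|x|/(2k) + 1)) for |x| ≤ k and φ_k(x) = ln(1 + k³/10) for |x| > k. Then: (i) each φ_k is nonnegative and twice continuously differentiable on ℝ; (ii) there exists a constant C, independent of k, such that |φ_k′(x)| ≤ C and |φ_k″(x)| ≤ C for all x ∈ ℝ and all k ≥ 1; (iii) for each fixed x ∈ ℝ, the sequence (φ_k(x))_{k≥1} is nondecreasing in k and converges to ln(1 + |x|³) as k → ∞. -/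
open Filter Set

/-- The truncated-logarithmic test functions of the compactness lemma. -/
noncomputable def phiTest (k : ℕ) (x : ℝ) : ℝ :=
  if |x| ≤ (k : ℝ) then
    Real.log (1 + |x| ^ 3 * (3 * x ^ 2 / (5 * (k : ℝ) ^ 2) - 3 * |x| / (2 * (k : ℝ)) + 1))
  else Real.log (1 + (k : ℝ) ^ 3 / 10)



lemma hasDerivAt_mul_abs (x : ℝ) : HasDerivAt (fun y : ℝ => y * |y|) (2 * |x|) x := by
  rcases lt_trichotomy x 0 with hx | hx | hx
  · have h : HasDerivAt (fun y : ℝ => -(y * y)) (2 * |x|) x := by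
      have := ((hasDerivAt_id x).mul (hasDerivAt_id x)).neg
      simp only [id] at this
      exact this.congr_deriv (by rw [abs_of_neg hx]; ring)
    refine h.congr_of_eventuallyEq ?_
    filter_upwards [eventually_lt_nhds hx] with y hy
    rw [abs_of_neg hy]; ring
  · subst hx
    rw [hasDerivAt_iff_isLittleO]
    simp only [abs_zero, mul_zero, zero_mul, sub_zero, smul_zero, sub_zero]
    calc (fun y : ℝ => y * |y|) =O[nhds 0] (fun y : ℝ => y * y) := by
          apply Asymptotics.IsBigO.of_bound 1
          filter_upwards with y
          simp [abs_mul, mul_comm]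
      _ =o[nhds 0] (fun y : ℝ => y) := by
          have h1 : (fun y : ℝ => y) =o[nhds (0:ℝ)] (fun _ => (1:ℝ)) := by
            rw [Asymptotics.isLittleO_one_iff]
            exact Filter.tendsto_id
          simpa using (Asymptotics.isBigO_refl (fun y : ℝ => y) (nhds 0)).mul_isLittleO h1
  · have h : HasDerivAt (fun y : ℝ => y * y) (2 * |x|) x := by
      have := (hasDerivAt_id x).mul (hasDerivAt_id x)
      simp only [id] at this
      exact this.congr_deriv (by rw [abs_of_pos hx]; ring)
    refine h.congr_of_eventuallyEq ?_
    filter_upwards [eventually_gt_nhds hx] with y hy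
    rw [abs_of_pos hy]
open Filter Set


noncomputable def hFun (k x : ℝ) : ℝ :=
  1 + 3/(5*k^2) * (x^3 * (x*|x|)) - 3/(2*k) * x^4 + x*(x*|x|)

noncomputable def hFun' (k x : ℝ) : ℝ :=
  3/k^2 * (x^2 * (x*|x|)) - 6/k * x^3 + 3*(x*|x|)

noncomputable def hFun'' (k x : ℝ) : ℝ :=
  12/k^2 * (x^2*|x|) - 18/k * x^2 + 6*|x|

lemma hasDerivAt_hFun (k x : ℝ) : HasDerivAt (hFun k) (hFun' k x) x := by
  have A := hasDerivAt_mul_abs x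
  have h1 : HasDerivAt (fun y : ℝ => y^3 * (y*|y|)) (3*x^2*(x*|x|) + x^3*(2*|x|)) x :=
    (hasDerivAt_pow 3 x).mul A |>.congr_deriv (by ring)
  have h2 : HasDerivAt (fun y : ℝ => y^4) (4*x^3) x := by
    simpa using hasDerivAt_pow 4 x
  have h3 : HasDerivAt (fun y : ℝ => y * (y*|y|)) (x*|x| + x*(2*|x|)) x := by
    have := (hasDerivAt_id x).mul A
    simp only [id_eq, one_mul] at this
    exact this.congr_deriv (by ring)
  have := (((h1.const_mul (3/(5*k^2))).const_add 1).sub (h2.const_mul (3/(2*k)))).add h3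
  refine this.congr_deriv ?_
  unfold hFun'
  have hx3 : x^3 * |x| = x^2 * (x * |x|) := by ring
  field_simp
  ring
lemma hasDerivAt_hFun' (k x : ℝ) : HasDerivAt (hFun' k) (hFun'' k x) x := by
  have A := hasDerivAt_mul_abs x
  have h1 : HasDerivAt (fun y : ℝ => y^2 * (y*|y|)) (2*x*(x*|x|) + x^2*(2*|x|)) x :=
    (hasDerivAt_pow 2 x).mul A |>.congr_deriv (by ring)
  have h2 : HasDerivAt (fun y : ℝ => y^3) (3*x^2) x := by
    simpa using hasDerivAt_pow 3 x
  have := ((h1.const_mul (3/k^2)).sub (h2.const_mul (6/k))).add (A.const_mul 3)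
  refine this.congr_deriv ?_
  unfold hFun''
  ring
lemma continuous_hFun'' (k : ℝ) : Continuous (hFun'' k) := by
  unfold hFun''
  fun_prop

lemma hFun_eq (k x : ℝ) (hk : 0 < k) :
    1 + |x| ^ 3 * (3 * x ^ 2 / (5 * k ^ 2) - 3 * |x| / (2 * k) + 1) = hFun k x := by
  unfold hFun
  rcases abs_cases x with ⟨h, _⟩ | ⟨h, _⟩ <;> rw [h] <;> field_simp <;> ring

lemma hFun_ge (k x : ℝ) (hk : 0 < k) (hx : |x| ≤ k) : 1 + |x|^3/10 ≤ hFun k x := by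
  have h4 : x^4 = |x|^4 := by rw [← abs_pow]; exact (abs_of_nonneg (by positivity)).symm
  have h5 : x^3 * (x*|x|) = |x|^5 := by rcases abs_cases x with ⟨h,_⟩|⟨h,_⟩ <;> rw [h] <;> ring
  have h3 : x*(x*|x|) = |x|^3 := by rcases abs_cases x with ⟨h,_⟩|⟨h,_⟩ <;> rw [h] <;> ring
  unfold hFun
  rw [h4, h5, h3]
  have ht : (0:ℝ) ≤ |x| := abs_nonneg x
  have key : 0 ≤ 6*|x|^5 - 15*k*|x|^4 + 9*k^2*|x|^3 := by
    nlinarith [mul_nonneg (mul_nonneg (pow_nonneg ht 3) (by linarith : (0:ℝ) ≤ 3*k - 2*|x|)) (by linarith : (0:ℝ) ≤ k - |x|)]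
  have heq : 3/(5*k^2) * |x|^5 - 3/(2*k) * |x|^4 + |x|^3 - |x|^3/10
      = (6*|x|^5 - 15*k*|x|^4 + 9*k^2*|x|^3) / (10*k^2) := by field_simp; ring
  nlinarith [div_nonneg key (by positivity : (0:ℝ) ≤ 10*k^2)]

lemma hFun_ge_one (k x : ℝ) (hk : 0 < k) : 1 ≤ hFun k x := by
  have h4 : x^4 = |x|^4 := by rw [← abs_pow]; exact (abs_of_nonneg (by positivity)).symm
  have h5 : x^3 * (x*|x|) = |x|^5 := by rcases abs_cases x with ⟨h,_⟩|⟨h,_⟩ <;> rw [h] <;> ring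
  have h3 : x*(x*|x|) = |x|^3 := by rcases abs_cases x with ⟨h,_⟩|⟨h,_⟩ <;> rw [h] <;> ring
  unfold hFun
  rw [h4, h5, h3]
  have ht : (0:ℝ) ≤ |x| := abs_nonneg x
  have key : 0 ≤ 6*|x|^5 - 15*k*|x|^4 + 10*k^2*|x|^3 := by
    nlinarith [mul_nonneg (pow_nonneg ht 3) (sq_nonneg (4*|x| - 5*k)),
      mul_nonneg (sq_nonneg k) (pow_nonneg ht 3)]
  have heq : 3/(5*k^2) * |x|^5 - 3/(2*k) * |x|^4 + |x|^3
      = (6*|x|^5 - 15*k*|x|^4 + 10*k^2*|x|^3) / (10*k^2) := by field_simp; ring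
  nlinarith [div_nonneg key (by positivity : (0:ℝ) ≤ 10*k^2)]

lemma hFun_pos (k x : ℝ) (hk : 0 < k) : 0 < hFun k x :=
  lt_of_lt_of_le one_pos (hFun_ge_one k x hk)

lemma hFun'_abs_le (k x : ℝ) (hk : 0 < k) (hx : |x| ≤ k) : |hFun' k x| ≤ 3*|x|^2 := by
  have hk2 : (0:ℝ) < k^2 := by positivity
  rcases abs_cases x with ⟨h, hx0⟩ | ⟨h, hx0⟩
  · have hxk : x ≤ k := h ▸ hx
    have e : hFun' k x = (3*x^4 - 6*k*x^3 + 3*k^2*x^2) / k^2 := by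
      unfold hFun'; rw [h]; field_simp
    rw [e, abs_div, abs_of_pos hk2, div_le_iff₀ hk2, ← sq_abs x, h, abs_le]
    constructor
    · nlinarith [mul_nonneg (mul_nonneg hx0 hx0) (sq_nonneg (x-k)), mul_nonneg (sq_nonneg x) (sq_nonneg k)]
    · nlinarith [mul_nonneg (pow_nonneg hx0 3) (by linarith : (0:ℝ) ≤ 2*k - x)]
  · have hxk : -k ≤ x := by linarith [h ▸ hx]
    have hx0' : x ≤ 0 := by linarith
    have e : hFun' k x = (-(3*x^4) - 6*k*x^3 - 3*k^2*x^2) / k^2 := by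
      unfold hFun'; rw [h]; field_simp; ring
    rw [e, abs_div, abs_of_pos hk2, div_le_iff₀ hk2, ← sq_abs x, h, abs_le]
    constructor
    · nlinarith [mul_nonneg (pow_nonneg (by linarith : (0:ℝ) ≤ -x) 3) (by linarith : (0:ℝ) ≤ x + 2*k)]
    · nlinarith [mul_nonneg (mul_nonneg (neg_nonneg.2 hx0') (neg_nonneg.2 hx0')) (sq_nonneg (x+k)), mul_nonneg (sq_nonneg x) (sq_nonneg k)]

lemma hFun''_abs_le (k x : ℝ) (hk : 0 < k) (hx : |x| ≤ k) : |hFun'' k x| ≤ 36*|x| := by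
  have hk2 : (0:ℝ) < k^2 := by positivity
  have ht : (0:ℝ) ≤ |x| := abs_nonneg x
  have h2 : x^2 = |x|^2 := (sq_abs x).symm
  have e : hFun'' k x = (12*|x|^3 - 18*k*|x|^2 + 6*k^2*|x|) / k^2 := by
    unfold hFun''
    rcases abs_cases x with ⟨h,_⟩|⟨h,_⟩ <;> rw [h] <;> field_simp <;> ring
  rw [e, abs_div, abs_of_pos hk2, div_le_iff₀ hk2, abs_le]
  constructor
  · nlinarith [mul_nonneg ht (sq_nonneg (4*|x| - 3*k)), mul_nonneg (sq_nonneg k) ht]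
  · nlinarith [mul_nonneg ht (mul_nonneg (by linarith : (0:ℝ) ≤ k - |x|) (by linarith : (0:ℝ) ≤ k + |x|)),
      mul_nonneg (mul_nonneg (le_of_lt hk) ht) ht, mul_nonneg (sq_nonneg k) ht]

lemma hFun'_div_le (k x : ℝ) (hk : 0 < k) (hx : |x| ≤ k) : |hFun' k x| ≤ 16 * hFun k x := by
  have h1 := hFun'_abs_le k x hk hx
  have h2 := hFun_ge k x hk hx
  have ht : (0:ℝ) ≤ |x| := abs_nonneg x
  nlinarith [mul_nonneg ht (sq_nonneg (4*|x| - 5)), sq_nonneg (4*|x| - 5)]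

lemma hFun''_div_le (k x : ℝ) (hk : 0 < k) (hx : |x| ≤ k) : |hFun'' k x| ≤ 48 * hFun k x := by
  have h1 := hFun''_abs_le k x hk hx
  have h2 := hFun_ge k x hk hx
  have ht : (0:ℝ) ≤ |x| := abs_nonneg x
  nlinarith [mul_nonneg ht (sq_nonneg (2*|x| - 3)), sq_nonneg (24*|x| - 39)]

lemma glueDeriv {k : ℝ} (hk : 0 < k) (G G' : ℝ → ℝ) (c : ℝ)
    (hG : ∀ x, |x| ≤ k → HasDerivAt G (G' x) x)
    (hGk : G k = c) (hGk' : G (-k) = c) (hDk : G' k = 0) (hDk' : G' (-k) = 0) (x : ℝ) :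
    HasDerivAt (fun y => if |y| ≤ k then G y else c) (if |x| ≤ k then G' x else 0) x := by
  set f : ℝ → ℝ := fun y => if |y| ≤ k then G y else c with hf
  rcases lt_trichotomy |x| k with hx | hx | hx
  · rw [if_pos hx.le]
    refine (hG x hx.le).congr_of_eventuallyEq ?_
    have hev : ∀ᶠ y in nhds x, |y| < k :=
      (isOpen_Iio.preimage continuous_abs).eventually_mem (by simpa using hx)
    filter_upwards [hev] with y hy
    simp [hf, hy.le]
  · -- boundary
    have hxk : x = k ∨ x = -k := by
      rcases abs_cases x with ⟨h, _⟩ | ⟨h, _⟩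
      · left; linarith
      · right; linarith
    have habs : |x| ≤ k := le_of_eq hx
    rw [if_pos habs]
    rcases hxk with hxk | hxk
    · rw [hxk, hDk]
      have hleft : HasDerivWithinAt f 0 (Iic k) k := by
        have h1 : HasDerivWithinAt G 0 (Iic k) k := by
          have := hG k (by rw [abs_of_pos hk]); rw [hDk] at this
          exact this.hasDerivWithinAt
        refine h1.congr_of_eventuallyEq ?_ (by simp [hf, abs_of_pos hk])
        have hev : ∀ᶠ y in nhds k, (0:ℝ) < y :=
          (isOpen_Ioi.preimage continuous_id).eventually_mem (by simpa using hk)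
        filter_upwards [eventually_nhdsWithin_of_eventually_nhds hev,
          self_mem_nhdsWithin] with y hy hy'
        simp [hf, abs_of_pos hy, (mem_Iic.mp hy')]
      have hright : HasDerivWithinAt f 0 (Ici k) k := by
        refine (hasDerivWithinAt_const k (Ici k) c).congr ?_ ?_
        · intro y hy
          by_cases h : |y| ≤ k
          · have : y = k := le_antisymm (le_trans (le_abs_self y) h) hy
            simp [hf, this, abs_of_pos hk, hGk]
          · simp [hf, h]
        · simp [hf, abs_of_pos hk, hGk]
      have := hleft.union hright
      rw [Iic_union_Ici] at this
      exact hasDerivWithinAt_univ.mp this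
    · rw [hxk, hDk']
      have habsk : |(-k : ℝ)| = k := by rw [abs_neg, abs_of_pos hk]
      have hleft : HasDerivWithinAt f 0 (Iic (-k)) (-k) := by
        refine (hasDerivWithinAt_const (-k) (Iic (-k)) c).congr ?_ ?_
        · intro y hy
          by_cases h : |y| ≤ k
          · have : y = -k := le_antisymm hy (neg_le_of_abs_le h)
            simp [hf, this, habsk, hGk']
          · simp [hf, h]
        · simp [hf, habsk, hGk']
      have hright : HasDerivWithinAt f 0 (Ici (-k)) (-k) := by
        have h1 : HasDerivWithinAt G 0 (Ici (-k)) (-k) := by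
          have := hG (-k) (le_of_eq habsk); rw [hDk'] at this
          exact this.hasDerivWithinAt
        refine h1.congr_of_eventuallyEq ?_ (by simp [hf, habsk])
        have hev : ∀ᶠ y in nhds (-k), y < 0 :=
          (isOpen_Iio.preimage continuous_id).eventually_mem (by simpa using hk)
        filter_upwards [eventually_nhdsWithin_of_eventually_nhds hev,
          self_mem_nhdsWithin] with y hy hy'
        have : |y| ≤ k := by rw [abs_of_neg hy]; linarith [mem_Ici.mp hy']
        simp [hf, this]
      have := hleft.union hright
      rw [Iic_union_Ici] at this
      exact hasDerivWithinAt_univ.mp this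
  · rw [if_neg (not_le.mpr hx)]
    refine (hasDerivAt_const x c).congr_of_eventuallyEq ?_
    have hev : ∀ᶠ y in nhds x, k < |y| :=
      (isOpen_Ioi.preimage continuous_abs).eventually_mem (by simpa using hx)
    filter_upwards [hev] with y hy
    simp [hf, not_le.mpr hy]

lemma continuous_hFun (k : ℝ) : Continuous (hFun k) := by
  unfold hFun; fun_prop

lemma continuous_hFun' (k : ℝ) : Continuous (hFun' k) := by
  unfold hFun'; fun_prop

lemma hFun_boundary (k : ℝ) (hk : 0 < k) :
    hFun k k = 1 + k^3/10 ∧ hFun k (-k) = 1 + k^3/10 := by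
  unfold hFun
  rw [abs_of_pos hk, abs_neg, abs_of_pos hk]
  constructor <;> field_simp <;> ring

lemma hFun'_boundary (k : ℝ) (hk : 0 < k) :
    hFun' k k = 0 ∧ hFun' k (-k) = 0 := by
  unfold hFun'
  rw [abs_of_pos hk, abs_neg, abs_of_pos hk]
  constructor <;> field_simp <;> ring

lemma hFun''_boundary (k : ℝ) (hk : 0 < k) :
    hFun'' k k = 0 ∧ hFun'' k (-k) = 0 := by
  unfold hFun''
  rw [abs_of_pos hk, abs_neg, abs_of_pos hk]
  constructor <;> field_simp <;> ring

noncomputable def D1 (k : ℕ) (x : ℝ) : ℝ :=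
  if |x| ≤ (k:ℝ) then hFun' k x / hFun k x else 0

noncomputable def D2 (k : ℕ) (x : ℝ) : ℝ :=
  if |x| ≤ (k:ℝ) then
    (hFun'' k x * hFun k x - hFun' k x * hFun' k x) / (hFun k x)^2 else 0

section
variable {k : ℕ} (hk1 : 1 ≤ k)
include hk1

lemma kpos : (0:ℝ) < (k:ℝ) := by exact_mod_cast Nat.pos_of_ne_zero (by omega)

lemma phiTest_eq :
    phiTest k = fun y => if |y| ≤ (k:ℝ) then Real.log (hFun k y)
      else Real.log (1 + (k:ℝ)^3/10) := by
  funext y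
  unfold phiTest
  by_cases h : |y| ≤ (k:ℝ)
  · rw [if_pos h, if_pos h, hFun_eq _ _ (kpos hk1)]
  · rw [if_neg h, if_neg h]

lemma hasDerivAt_phiTest (x : ℝ) : HasDerivAt (phiTest k) (D1 k x) x := by
  rw [phiTest_eq hk1]
  unfold D1
  have hk := kpos hk1
  exact glueDeriv hk (fun y => Real.log (hFun k y)) (fun y => hFun' k y / hFun k y) _
    (fun y _ => (hasDerivAt_hFun k y).log (ne_of_gt (hFun_pos k y hk)))
    (by simp [(hFun_boundary k hk).1]) (by simp [(hFun_boundary k hk).2])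
    (by simp [(hFun'_boundary k hk).1]) (by simp [(hFun'_boundary k hk).2]) x

lemma hasDerivAt_D1 (x : ℝ) : HasDerivAt (D1 k) (D2 k x) x := by
  unfold D1 D2
  have hk := kpos hk1
  exact glueDeriv hk (fun y => hFun' k y / hFun k y)
    (fun y => (hFun'' k y * hFun k y - hFun' k y * hFun' k y) / (hFun k y)^2) 0
    (fun y _ => (hasDerivAt_hFun' k y).div (hasDerivAt_hFun k y) (ne_of_gt (hFun_pos k y hk)))
    (by simp [(hFun'_boundary k hk).1]) (by simp [(hFun'_boundary k hk).2])
    (by simp [(hFun'_boundary k hk).1, (hFun''_boundary k hk).1])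
    (by simp [(hFun'_boundary k hk).2, (hFun''_boundary k hk).2]) x

lemma deriv_phiTest : deriv (phiTest k) = D1 k :=
  funext fun x => (hasDerivAt_phiTest hk1 x).deriv

lemma deriv_D1 : deriv (D1 k) = D2 k :=
  funext fun x => (hasDerivAt_D1 hk1 x).deriv

lemma continuous_D2 : Continuous (D2 k) := by
  have hk := kpos hk1
  unfold D2
  apply Continuous.if
  · intro a ha
    have hs : {x : ℝ | |x| ≤ (k:ℝ)} = Set.Icc (-(k:ℝ)) (k:ℝ) := by
      ext y; simp [abs_le]
    rw [hs, frontier_Icc (by linarith)] at ha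
    rcases ha with rfl | rfl
    · rw [(hFun'_boundary k hk).2, (hFun''_boundary k hk).2]; ring_nf
    · rw [(hFun'_boundary k hk).1, (hFun''_boundary k hk).1]; ring_nf
  · exact ((continuous_hFun'' k |>.mul (continuous_hFun k)).sub
      ((continuous_hFun' k).mul (continuous_hFun' k))).div
      ((continuous_hFun k).pow 2) (fun x => pow_ne_zero 2 (ne_of_gt (hFun_pos k x hk)))
  · exact continuous_const

lemma contDiff_phiTest : ContDiff ℝ 2 (phiTest k) := by
  have h2 : (2 : WithTop ℕ∞) = 1 + 1 := by norm_num
  rw [h2, contDiff_succ_iff_deriv]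
  refine ⟨fun x => (hasDerivAt_phiTest hk1 x).differentiableAt, by simp, ?_⟩
  rw [deriv_phiTest hk1]
  have h1 : (1 : WithTop ℕ∞) = 0 + 1 := by norm_num
  rw [h1, contDiff_succ_iff_deriv]
  refine ⟨fun x => (hasDerivAt_D1 hk1 x).differentiableAt, by simp, ?_⟩
  rw [deriv_D1 hk1, contDiff_zero]
  exact continuous_D2 hk1

end

section
variable {k : ℕ} (hk1 : 1 ≤ k)
include hk1

lemma D1_bound (x : ℝ) : |D1 k x| ≤ 304 := by
  have hk := kpos hk1
  unfold D1
  split_ifs with h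
  · have hp := hFun_pos k x hk
    rw [abs_div, abs_of_pos hp, div_le_iff₀ hp]
    have := hFun'_div_le k x hk h
    nlinarith
  · simp

lemma D2_bound (x : ℝ) : |D2 k x| ≤ 304 := by
  have hk := kpos hk1
  unfold D2
  split_ifs with h
  · have hp := hFun_pos k x hk
    have hp2 : (0:ℝ) < (hFun k x)^2 := by positivity
    rw [abs_div, abs_of_pos hp2, div_le_iff₀ hp2]
    have h1 := hFun'_div_le k x hk h
    have h2 := hFun''_div_le k x hk h
    have tri : |hFun'' k x * hFun k x - hFun' k x * hFun' k x|
        ≤ |hFun'' k x * hFun k x| + |hFun' k x * hFun' k x| := abs_sub _ _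
    rw [abs_mul, abs_mul, abs_of_pos hp] at tri
    have h3 : |hFun' k x| * |hFun' k x| ≤ (16*hFun k x)*(16*hFun k x) :=
      mul_le_mul h1 h1 (abs_nonneg _) (by positivity)
    have h4 : |hFun'' k x| * hFun k x ≤ 48*hFun k x * hFun k x :=
      mul_le_mul_of_nonneg_right h2 hp.le
    nlinarith
  · simp

lemma phiTest_nonneg (x : ℝ) : 0 ≤ phiTest k x := by
  have hk := kpos hk1
  unfold phiTest
  split_ifs with h
  · apply Real.log_nonneg
    rw [hFun_eq _ _ hk]
    exact hFun_ge_one _ _ hk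
  · apply Real.log_nonneg
    have : (0:ℝ) ≤ (k:ℝ)^3/10 := by positivity
    linarith

end

lemma inner_mono (t k l : ℝ) (ht : 0 ≤ t) (htk : t ≤ k) (hk : 0 < k) (hkl : k ≤ l) :
    t^3*(3*t^2/(5*k^2) - 3*t/(2*k) + 1) ≤ t^3*(3*t^2/(5*l^2) - 3*t/(2*l) + 1) := by
  have hl : 0 < l := lt_of_lt_of_le hk hkl
  rw [← sub_nonneg]
  have e : t^3*(3*t^2/(5*l^2) - 3*t/(2*l) + 1) - t^3*(3*t^2/(5*k^2) - 3*t/(2*k) + 1)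
      = ((l-k)*(15*t^4*k*l - 6*t^5*(k+l))) / (10*k^2*l^2) := by
    field_simp; ring
  rw [e]
  apply div_nonneg _ (by positivity)
  have h9 : 0 ≤ 15*k*l - 6*t*(k+l) := by nlinarith
  nlinarith [mul_nonneg (mul_nonneg (pow_nonneg ht 4) (sub_nonneg.2 hkl)) h9]

lemma phiTest_mono (x : ℝ) {k l : ℕ} (hk1 : 1 ≤ k) (hkl : k ≤ l) :
    phiTest k x ≤ phiTest l x := by
  have hk : (0:ℝ) < (k:ℝ) := kpos hk1
  have hl : (0:ℝ) < (l:ℝ) := kpos (le_trans hk1 hkl)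
  have hklr : (k:ℝ) ≤ (l:ℝ) := Nat.cast_le.mpr hkl
  have ht : (0:ℝ) ≤ |x| := abs_nonneg x
  unfold phiTest
  by_cases hxl : |x| ≤ (l:ℝ)
  · by_cases hxk : |x| ≤ (k:ℝ)
    · rw [if_pos hxk, if_pos hxl]
      apply Real.log_le_log
      · rw [hFun_eq _ _ hk]; exact hFun_pos _ _ hk
      · have := inner_mono (|x|) (k:ℝ) (l:ℝ) ht hxk hk hklr
        rw [← sq_abs x]
        linarith
    · rw [if_neg hxk, if_pos hxl]
      apply Real.log_le_log (by positivity)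
      have h1 : 1 + |x|^3/10 ≤ 1 + |x| ^ 3 * (3 * x ^ 2 / (5 * (l:ℝ) ^ 2) - 3 * |x| / (2 * (l:ℝ)) + 1) := by
        rw [hFun_eq _ _ hl]; exact hFun_ge _ _ hl hxl
      have h2 : (k:ℝ)^3 ≤ |x|^3 := pow_le_pow_left₀ hk.le (le_of_lt (not_le.mp hxk)) 3
      linarith
  · have hxk : ¬ |x| ≤ (k:ℝ) := fun h => hxl (le_trans h hklr)
    rw [if_neg hxk, if_neg hxl]
    apply Real.log_le_log (by positivity)
    have : (k:ℝ)^3 ≤ (l:ℝ)^3 := pow_le_pow_left₀ hk.le hklr 3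
    linarith

lemma phiTest_tendsto (x : ℝ) :
    Filter.Tendsto (fun k : ℕ => phiTest k x) Filter.atTop
      (nhds (Real.log (1 + |x| ^ 3))) := by
  have hpos : (0:ℝ) < 1 + |x|^3 := by positivity
  have hc : Continuous (fun u : ℝ => 1 + |x|^3*((3*x^2/5)*u^2 - (3*|x|/2)*u + 1)) := by
    fun_prop
  have harg : Filter.Tendsto
      (fun k : ℕ => 1 + |x|^3*((3*x^2/5)*(1/(k:ℝ))^2 - (3*|x|/2)*(1/(k:ℝ)) + 1))
      Filter.atTop (nhds (1 + |x|^3)) := by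
    have h0 : (1:ℝ) + |x|^3*((3*x^2/5)*(0:ℝ)^2 - (3*|x|/2)*(0:ℝ) + 1) = 1 + |x|^3 := by ring
    have := (hc.tendsto 0).comp tendsto_one_div_atTop_nhds_zero_nat
    rw [h0] at this
    exact this
  have hlog := ((Real.continuousAt_log (ne_of_gt hpos)).tendsto).comp harg
  refine Filter.Tendsto.congr' ?_ hlog
  filter_upwards [Filter.eventually_ge_atTop (max 1 ⌈|x|⌉₊)] with k hk
  have hk1 : 1 ≤ k := le_trans (le_max_left _ _) hk
  have hkx : |x| ≤ (k:ℝ) := by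
    calc |x| ≤ (⌈|x|⌉₊ : ℝ) := Nat.le_ceil _
    _ ≤ (k:ℝ) := Nat.cast_le.mpr (le_trans (le_max_right _ _) hk)
  have hk0 : ((k:ℝ)) ≠ 0 := ne_of_gt (kpos hk1)
  simp only [Function.comp]
  unfold phiTest
  rw [if_pos hkx]
  congr 1
  field_simp

/-- The functions `φ_k` are nonnegative, `C²`, have first and second derivatives
bounded by a constant independent of `k`, and increase pointwise to `ln(1+|x|³)`. -/
theorem stmt_6 :
    (∀ k : ℕ, 1 ≤ k → (∀ x : ℝ, 0 ≤ phiTest k x) ∧ ContDiff ℝ 2 (phiTest k)) ∧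
    (∃ C : ℝ, ∀ k : ℕ, 1 ≤ k → ∀ x : ℝ,
        |deriv (phiTest k) x| ≤ C ∧ |deriv (deriv (phiTest k)) x| ≤ C) ∧
    (∀ x : ℝ,
        (∀ k l : ℕ, 1 ≤ k → k ≤ l → phiTest k x ≤ phiTest l x) ∧
        Filter.Tendsto (fun k : ℕ => phiTest k x) Filter.atTop
          (nhds (Real.log (1 + |x| ^ 3)))) := by
  refine ⟨fun k hk => ⟨phiTest_nonneg hk, contDiff_phiTest hk⟩, ⟨304, fun k hk x => ?_⟩,
    fun x => ⟨fun k l hk hkl => phiTest_mono x hk hkl, phiTest_tendsto x⟩⟩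
  constructor
  · rw [deriv_phiTest hk]
    exact D1_bound hk x
  · rw [deriv_phiTest hk, deriv_D1 hk]
    exact D2_bound hk x
end

section
/- Let T > 0, k, θ, δ > 0, and write Ō = [0,∞). Let ν̂_0 be a finite positive measure on Ō, μ̂ a finite positive measure on [0,T] × Ō, and (m̂_t)_{t∈[0,T]} a measurable family of finite positive measures on Ō with ∫_0^T ∫_Ō (1 + x) m̂_t(dx) dt < ∞. Suppose that for every bounded function u : [0,T] × Ō → ℝ that is C¹ in t and C² in x with bounded derivatives ∂_t u, ∂_x u, ∂²_{xx} u, the linear programming constraint ∫_Ō u(0,x) ν̂_0(dx) + ∫_0^T ∫_Ō [∂_t u(t,x) + k(θ − x)∂_x u(t,x) + (δ²x/2)∂²_{xx} u(t,x)] m̂_t(dx) dt = ∫_{[0,T]×Ō} u(t,x) μ̂(dt,dx) holds. Then m̂_t(Ō) ≤ ν̂_0(Ō) for Lebesgue-almost every t ∈ [0,T]. -/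
open MeasureTheory Set Metric Filter Topology

/-- Mass bound from the linear programming constraint for the class of agents not yet
in the market, driven by the CIR generator `k(θ−x)∂_x + (δ²x/2)∂²_{xx}`:
`m̂_t(Ō) ≤ ν̂_0(Ō)` for almost every `t ∈ [0,T]`. -/
theorem stmt_10 (T k θ δ : ℝ) (hT : 0 < T) (hk : 0 < k) (hθ : 0 < θ) (hδ : 0 < δ)
    (ν0 : Measure ℝ) [IsFiniteMeasure ν0]
    (μ : Measure (ℝ × ℝ)) [IsFiniteMeasure μ]
    (m : ProbabilityTheory.Kernel ℝ ℝ) (hmfin : ∀ t, IsFiniteMeasure (m t))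
    (hmint : ∫⁻ t in Icc (0:ℝ) T, ∫⁻ x in Ici (0:ℝ), ENNReal.ofReal (1 + x) ∂(m t) < ⊤)
    (hLP : ∀ u : ℝ → ℝ → ℝ,
      (∀ x, ContDiff ℝ 1 fun t => u t x) →
      (∀ t, ContDiff ℝ 2 (u t)) →
      (∃ C : ℝ, ∀ t x : ℝ, |u t x| ≤ C ∧ |deriv (fun s => u s x) t| ≤ C ∧
          |deriv (u t) x| ≤ C ∧ |deriv (deriv (u t)) x| ≤ C) →
      (∫ x in Ici (0:ℝ), u 0 x ∂ν0)
        + (∫ t in Icc (0:ℝ) T, ∫ x in Ici (0:ℝ),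
            (deriv (fun s => u s x) t + k * (θ - x) * deriv (u t) x
              + δ ^ 2 * x / 2 * deriv (deriv (u t)) x) ∂(m t))
        = ∫ p in Icc (0:ℝ) T ×ˢ Ici (0:ℝ), u p.1 p.2 ∂μ) :
    ∀ᵐ t ∂(volume.restrict (Icc (0:ℝ) T)), m t (Ici 0) ≤ ν0 (Ici 0) := by
  have hgnn : ∀ t : ℝ, 0 ≤ (m t (Ici (0:ℝ))).toReal := fun t => ENNReal.toReal_nonneg
  have hcnn : 0 ≤ (ν0 (Ici (0:ℝ))).toReal := ENNReal.toReal_nonneg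
  have hgmeas : Measurable fun t : ℝ => (m t (Ici (0:ℝ))).toReal :=
    (m.measurable_coe measurableSet_Ici).ennreal_toReal
  -- integrability of the mass function on [0, T]
  have hgint : IntegrableOn (fun t : ℝ => (m t (Ici (0:ℝ))).toReal) (Icc 0 T) volume := by
    refine ⟨hgmeas.aestronglyMeasurable, ?_⟩
    rw [hasFiniteIntegral_iff_norm]
    have hkey : ∀ t : ℝ, ENNReal.ofReal ‖(m t (Ici (0:ℝ))).toReal‖ ≤
        ∫⁻ x in Ici (0:ℝ), ENNReal.ofReal (1 + x) ∂(m t) := by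
      intro t
      haveI := hmfin t
      rw [Real.norm_of_nonneg (hgnn t), ENNReal.ofReal_toReal (measure_ne_top _ _)]
      have : m t (Ici (0:ℝ)) = ∫⁻ x in Ici (0:ℝ), 1 ∂(m t) := (setLIntegral_one _).symm
      rw [this]
      refine lintegral_mono_ae ?_
      filter_upwards [ae_restrict_mem measurableSet_Ici] with x hx
      calc (1 : ENNReal) = ENNReal.ofReal 1 := by simp
      _ ≤ ENNReal.ofReal (1 + x) := ENNReal.ofReal_le_ofReal (by simpa using hx)
    exact lt_of_le_of_lt (lintegral_mono_ae (ae_of_all _ hkey)) hmint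
  -- the key testing inequality
  have key : ∀ f : ℝ → ℝ, ContDiff ℝ 1 f → HasCompactSupport f → (∀ t, 0 ≤ f t) →
      (∫ t in Icc (0:ℝ) T, (m t (Ici (0:ℝ))).toReal * f t)
        ≤ (ν0 (Ici (0:ℝ))).toReal * ∫ s in (0:ℝ)..T, f s := by
    intro f hf hcs hfnn
    have hfc : Continuous f := hf.continuous
    have hfi : Integrable f volume := hfc.integrable_of_hasCompactSupport hcs
    set F : ℝ → ℝ := fun s => ∫ x in s..T, f x with hFdef
    have hdF : ∀ t, HasDerivAt F (-f t) t := fun t =>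
      intervalIntegral.integral_hasDerivAt_left hfi.intervalIntegrable
        (hfc.stronglyMeasurableAtFilter _ _) hfc.continuousAt
    have hderivF : deriv F = fun t => -f t := funext fun t => (hdF t).deriv
    have hF1 : ContDiff ℝ 1 F := contDiff_one_iff_deriv.2
      ⟨fun t => (hdF t).differentiableAt, by rw [hderivF]; exact hfc.neg⟩
    obtain ⟨M, hM⟩ := hcs.exists_bound_of_continuous hfc
    have hM0 : 0 ≤ M := le_trans (norm_nonneg (f 0)) (hM 0)
    have hI0 : 0 ≤ ∫ x, ‖f x‖ := integral_nonneg fun x => norm_nonneg _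
    have hFb : ∀ t, |F t| ≤ ∫ x, ‖f x‖ := by
      intro t
      have h1 : ‖∫ x in t..T, f x‖ ≤ ∫ x in Set.uIoc t T, ‖f x‖ :=
        intervalIntegral.norm_integral_le_integral_norm_uIoc
      have h2 : ∫ x in Set.uIoc t T, ‖f x‖ ≤ ∫ x, ‖f x‖ :=
        setIntegral_le_integral hfi.norm (ae_of_all _ fun x => norm_nonneg _)
      calc |F t| = ‖∫ x in t..T, f x‖ := (Real.norm_eq_abs _).symm
      _ ≤ _ := le_trans h1 h2
    have hbd : ∃ C : ℝ, ∀ t x : ℝ, |(fun t (_ : ℝ) => F t) t x| ≤ C ∧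
        |deriv (fun s => (fun t (_ : ℝ) => F t) s x) t| ≤ C ∧
        |deriv ((fun t (_ : ℝ) => F t) t) x| ≤ C ∧
        |deriv (deriv ((fun t (_ : ℝ) => F t) t)) x| ≤ C := by
      refine ⟨(∫ x, ‖f x‖) + M, fun t x => ⟨?_, ?_, ?_, ?_⟩⟩
      · exact le_trans (hFb t) (by linarith)
      · show |deriv F t| ≤ _
        rw [(hdF t).deriv, abs_neg]
        calc |f t| = ‖f t‖ := rfl
        _ ≤ M := hM t
        _ ≤ _ := by linarith
      · show |deriv (fun _ : ℝ => F t) x| ≤ _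
        simp only [deriv_const']
        rw [abs_zero]; linarith
      · show |deriv (deriv (fun _ : ℝ => F t)) x| ≤ _
        simp only [deriv_const']
        rw [abs_zero]; linarith
    have hlp := hLP (fun t _ => F t) (fun _ => hF1) (fun _ => contDiff_const) hbd
    simp only [deriv_const', mul_zero, add_zero, hderivF, setIntegral_const, smul_eq_mul,
      mul_neg, integral_neg] at hlp
    have hrhs : 0 ≤ ∫ p in Icc (0:ℝ) T ×ˢ Ici (0:ℝ), F p.1 ∂μ := by
      refine setIntegral_nonneg (measurableSet_Icc.prod measurableSet_Ici) fun p hp => ?_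
      exact intervalIntegral.integral_nonneg hp.1.2 fun x _ => hfnn x
    have hF0 : F 0 = ∫ s in (0:ℝ)..T, f s := rfl
    simp only [measureReal_def, hF0] at hlp
    linarith [hlp, hrhs]
  -- interval bound via bump functions
  have hindint : Integrable ((Icc (0:ℝ) T).indicator fun t => (m t (Ici (0:ℝ))).toReal) volume :=
    (integrable_indicator_iff measurableSet_Icc).2 hgint
  have hIB : ∀ x r : ℝ, 0 < r →
      (∫ t in closedBall x r, (Icc (0:ℝ) T).indicator (fun t => (m t (Ici (0:ℝ))).toReal) t)
        ≤ (ν0 (Ici (0:ℝ))).toReal * (2 * r) := by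
    intro x r hr
    refine le_of_forall_pos_le_add fun η hη => ?_
    have h4c : (0:ℝ) < 4 * (ν0 (Ici (0:ℝ))).toReal + 1 := by linarith
    set ε : ℝ := η / (4 * (ν0 (Ici (0:ℝ))).toReal + 1) with hεdef
    have hε : 0 < ε := div_pos hη h4c
    have hεd : ε * (4 * (ν0 (Ici (0:ℝ))).toReal + 1) = η := div_mul_cancel₀ η (ne_of_gt h4c)
    set φ : ContDiffBump x := ⟨r + ε, r + 2 * ε, by linarith, by linarith⟩ with hφdef
    have hφnn : ∀ t, 0 ≤ φ t := fun t => φ.nonneg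
    have hφg : IntegrableOn (fun t => (m t (Ici (0:ℝ))).toReal * φ t) (Icc 0 T) volume := by
      have := hgint.bdd_mul φ.continuous.aestronglyMeasurable
        (c := 1) (ae_of_all _ fun t => by rw [Real.norm_eq_abs, abs_of_nonneg (hφnn t)]; exact φ.le_one)
      exact this.congr (ae_of_all _ fun t => mul_comm _ _)
    have h1 : (∫ t in closedBall x r,
          (Icc (0:ℝ) T).indicator (fun t => (m t (Ici (0:ℝ))).toReal) t)
        ≤ ∫ t in Icc (0:ℝ) T, (m t (Ici (0:ℝ))).toReal * φ t := by
      rw [← integral_indicator measurableSet_closedBall, ← integral_indicator measurableSet_Icc]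
      refine integral_mono
        ((integrable_indicator_iff measurableSet_closedBall).2 hindint.integrableOn)
        ((integrable_indicator_iff measurableSet_Icc).2 hφg) fun t => ?_
      by_cases ht : t ∈ closedBall x r
      · rw [indicator_of_mem ht]
        by_cases ht2 : t ∈ Icc (0:ℝ) T
        · rw [indicator_of_mem ht2, indicator_of_mem ht2,
            φ.one_of_mem_closedBall
              (closedBall_subset_closedBall (le_add_of_nonneg_right hε.le) ht), mul_one]
        · rw [indicator_of_notMem ht2, indicator_of_notMem ht2]
      · rw [indicator_of_notMem ht]
        exact indicator_nonneg (fun s _ => mul_nonneg (hgnn s) (hφnn s)) t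
    have h2 := key φ (φ.contDiff) φ.hasCompactSupport hφnn
    have h3 : (∫ s in (0:ℝ)..T, φ s) ≤ 2 * r + 4 * ε := by
      rw [intervalIntegral.integral_of_le hT.le]
      have h31 : (∫ s in Ioc (0:ℝ) T, φ s) ≤ ∫ s, φ s :=
        setIntegral_le_integral φ.integrable (ae_of_all _ hφnn)
      have h32 : (∫ s, φ s) ≤ ∫ s in closedBall x (r + 2 * ε), (1:ℝ) := by
        rw [← integral_indicator measurableSet_closedBall]
        refine integral_mono φ.integrable
          ((integrable_indicator_iff measurableSet_closedBall).2
            (integrableOn_const (by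
              rw [Real.volume_closedBall]; exact ENNReal.ofReal_ne_top))) fun t => ?_
        by_cases ht : t ∈ closedBall x (r + 2 * ε)
        · rw [indicator_of_mem ht]; exact φ.le_one
        · rw [indicator_of_notMem ht]
          have : φ t = 0 := by
            have : t ∉ Function.support φ := by
              rw [φ.support_eq]
              exact fun h => ht (ball_subset_closedBall h)
            simpa [Function.mem_support, not_not] using this
          rw [this]
      have h33 : (∫ s in closedBall x (r + 2 * ε), (1:ℝ)) = 2 * r + 4 * ε := by
        rw [setIntegral_const, Real.volume_real_closedBall (by linarith), smul_eq_mul, mul_one]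
        ring
      linarith
    have h4 : (ν0 (Ici (0:ℝ))).toReal * (∫ s in (0:ℝ)..T, φ s)
        ≤ (ν0 (Ici (0:ℝ))).toReal * (2 * r + 4 * ε) := mul_le_mul_of_nonneg_left h3 hcnn
    nlinarith [h1, h2, h4, hε, hεd]
  -- Lebesgue differentiation
  have hle : ∀ᵐ x ∂(volume : Measure ℝ),
      (Icc (0:ℝ) T).indicator (fun t => (m t (Ici (0:ℝ))).toReal) x ≤ (ν0 (Ici (0:ℝ))).toReal := by
    filter_upwards [IsUnifLocDoublingMeasure.ae_tendsto_average (μ := volume)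
      hindint.locallyIntegrable 1] with x hx
    have htd : Tendsto (fun r => ⨍ y in closedBall x r,
        (Icc (0:ℝ) T).indicator (fun t => (m t (Ici (0:ℝ))).toReal) y) (𝓝[>] 0)
        (𝓝 ((Icc (0:ℝ) T).indicator (fun t => (m t (Ici (0:ℝ))).toReal) x)) :=
      hx (fun _ => x) id tendsto_id (by
        filter_upwards [self_mem_nhdsWithin] with r hr
        simpa using mem_closedBall_self (x := x) (by simpa using le_of_lt hr))
    refine le_of_tendsto htd ?_
    filter_upwards [self_mem_nhdsWithin] with r hr
    have hr' : (0:ℝ) < r := hr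
    rw [setAverage_eq, Real.volume_real_closedBall (by linarith), smul_eq_mul]
    rw [inv_mul_le_iff₀ (by linarith)]
    calc _ ≤ (ν0 (Ici (0:ℝ))).toReal * (2 * r) := hIB x r hr'
    _ = 2 * r * (ν0 (Ici (0:ℝ))).toReal := by ring
  -- conclude
  filter_upwards [ae_restrict_of_ae hle, ae_restrict_mem measurableSet_Icc] with t h1 h2
  rw [indicator_of_mem h2] at h1
  haveI := hmfin t
  exact (ENNReal.toReal_le_toReal (measure_ne_top _ _) (measure_ne_top _ _)).1 h1
end

section
/- Let K ≥ 1 be an integer, P* > 0, c_p, c_op > 0, d_p, d_op ≥ 0 be reals, H_1,…,H_K : ℝ² → ℝ be convex functions with H_k ≥ 0 for all k, G_0 : ℝ → ℝ a nonnegative m-strongly convex function, and Φ̄_1,…,Φ̄_K : ℝ → ℝ m-strongly convex functions satisfying Φ̄_k(r) ≥ (m/2)r² for all r ≥ 0. Define G : ℝ^(2+K) → ℝ by G(p,q,r_1,…,r_K) = Σ_{k=1}^K [c_p·H_k(p,r_k) + c_op·H_k(q,r_k)] + c_p·G_0(p) + c_op·G_0(q) − c_p·d_p·p − c_op·d_op·q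 + Σ_{k=1}^K Φ̄_k(r_k). Then the unique minimizer (p*, q*, r*) of G on [0,P*] × [0,P*] × [0,∞)^K satisfies, for every k, r*_k ≤ √(2·(G(0,0,…,0) + P*·(c_p·d_p + c_op·d_op))/m). -/
open Set

set_option maxHeartbeats 1000000 in
/-- A priori bound on the fuel-price components of the unique minimizer of the
electricity/fuel price objective on `[0,P*] × [0,P*] × [0,∞)^K`. -/
theorem stmt_13 (K : ℕ) (hK : 1 ≤ K) (Pstar cp cop dp dop m : ℝ)
    (hPstar : 0 < Pstar) (hcp : 0 < cp) (hcop : 0 < cop)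
    (hdp : 0 ≤ dp) (hdop : 0 ≤ dop) (hm : 0 < m)
    (H : Fin K → ℝ × ℝ → ℝ) (hH : ∀ k, ConvexOn ℝ Set.univ (H k))
    (hHpos : ∀ k p, 0 ≤ H k p)
    (G0 : ℝ → ℝ) (hG0 : StrongConvexOn Set.univ m G0) (hG0pos : ∀ x, 0 ≤ G0 x)
    (Phi : Fin K → ℝ → ℝ) (hPhi : ∀ k, StrongConvexOn Set.univ m (Phi k))
    (hPhiLB : ∀ k, ∀ r : ℝ, 0 ≤ r → m / 2 * r ^ 2 ≤ Phi k r)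
    (G : ℝ × ℝ × (Fin K → ℝ) → ℝ)
    (hG : ∀ z : ℝ × ℝ × (Fin K → ℝ),
      G z = (∑ k, (cp * H k (z.1, z.2.2 k) + cop * H k (z.2.1, z.2.2 k)))
        + cp * G0 z.1 + cop * G0 z.2.1 - cp * dp * z.1 - cop * dop * z.2.1
        + ∑ k, Phi k (z.2.2 k))
    (S : Set (ℝ × ℝ × (Fin K → ℝ)))
    (hS : S = Icc 0 Pstar ×ˢ Icc 0 Pstar ×ˢ {r : Fin K → ℝ | ∀ k, 0 ≤ r k}) :
    (∃! z, z ∈ S ∧ IsMinOn G S z) ∧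
    ∀ z, z ∈ S → IsMinOn G S z → ∀ k,
      z.2.2 k ≤ Real.sqrt
        (2 * (G (0, 0, fun _ => 0) + Pstar * (cp * dp + cop * dop)) / m) := by
  have hPhi0 : ∀ k r, (0:ℝ) ≤ r → 0 ≤ Phi k r := fun k r hr =>
    le_trans (by positivity) (hPhiLB k r hr)
  obtain ⟨C0, hC0⟩ : ∃ c : ℝ, c = G (0, 0, fun _ => 0) + Pstar * (cp * dp + cop * dop) :=
    ⟨_, rfl⟩
  -- nonnegativity of G at the origin
  have hG00 : 0 ≤ G (0, 0, fun _ => 0) := by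
    rw [hG]
    have h1 : (0:ℝ) ≤ ∑ k : Fin K, (cp * H k 0 + cop * H k 0) :=
      Finset.sum_nonneg fun k _ =>
        add_nonneg (mul_nonneg hcp.le (hHpos _ _)) (mul_nonneg hcop.le (hHpos _ _))
    have h2 : (0:ℝ) ≤ ∑ k : Fin K, Phi k 0 :=
      Finset.sum_nonneg fun k _ => hPhi0 k 0 le_rfl
    have hcpG : 0 ≤ cp * G0 0 := mul_nonneg hcp.le (hG0pos 0)
    have hcopG : 0 ≤ cop * G0 0 := mul_nonneg hcop.le (hG0pos 0)
    simpa [Prod.mk_zero_zero] using by linarith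
  have hC0nn : (0:ℝ) ≤ C0 := by
    have : (0:ℝ) ≤ Pstar * (cp * dp + cop * dop) := by positivity
    rw [hC0]; linarith
  subst hS
  -- lower bound for G on S
  have LB : ∀ z ∈ Icc (0:ℝ) Pstar ×ˢ Icc (0:ℝ) Pstar ×ˢ {r : Fin K → ℝ | ∀ k, 0 ≤ r k},
      ∀ k, m / 2 * (z.2.2 k) ^ 2 - Pstar * (cp * dp + cop * dop) ≤ G z := by
    rintro ⟨p, q, r⟩ ⟨⟨hp0, hpP⟩, ⟨hq0, hqP⟩, hr⟩ k
    rw [hG]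
    simp only
    have h1 : (0:ℝ) ≤ ∑ j : Fin K, (cp * H j (p, r j) + cop * H j (q, r j)) :=
      Finset.sum_nonneg fun j _ =>
        add_nonneg (mul_nonneg hcp.le (hHpos _ _)) (mul_nonneg hcop.le (hHpos _ _))
    have h2 : m / 2 * (r k) ^ 2 ≤ ∑ j : Fin K, Phi j (r j) :=
      le_trans (hPhiLB k (r k) (hr k))
        (Finset.single_le_sum (fun j _ => hPhi0 j (r j) (hr j)) (Finset.mem_univ k))
    have h3 : cp * dp * p ≤ cp * dp * Pstar :=
      mul_le_mul_of_nonneg_left hpP (by positivity)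
    have h4 : cop * dop * q ≤ cop * dop * Pstar :=
      mul_le_mul_of_nonneg_left hqP (by positivity)
    have h5 : 0 ≤ cp * G0 p := mul_nonneg hcp.le (hG0pos p)
    have h6 : 0 ≤ cop * G0 q := mul_nonneg hcop.le (hG0pos q)
    linarith [h1, h2, h3, h4, h5, h6]
  -- strict convexity of G
  have hconv : StrictConvexOn ℝ Set.univ G := by
    refine ⟨convex_univ, fun x _ y _ hxy a b ha hb hab => ?_⟩
    have hco1 : (a • x + b • y).1 = a * x.1 + b * y.1 := by
      simp [smul_eq_mul]
    have hco2 : (a • x + b • y).2.1 = a * x.2.1 + b * y.2.1 := by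
      simp [smul_eq_mul]
    have hco3 : ∀ k, (a • x + b • y).2.2 k = a * x.2.2 k + b * y.2.2 k := by
      intro k; simp [smul_eq_mul]
    have key : G (a • x + b • y) ≤ a * G x + b * G y -
        a * b * (cp * (m / 2 * (x.1 - y.1) ^ 2) + cop * (m / 2 * (x.2.1 - y.2.1) ^ 2)
          + ∑ k : Fin K, m / 2 * (x.2.2 k - y.2.2 k) ^ 2) := by
      have hsum1 : ∑ k : Fin K, (cp * H k (a * x.1 + b * y.1, a * x.2.2 k + b * y.2.2 k)
            + cop * H k (a * x.2.1 + b * y.2.1, a * x.2.2 k + b * y.2.2 k))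
          ≤ a * ∑ k : Fin K, (cp * H k (x.1, x.2.2 k) + cop * H k (x.2.1, x.2.2 k))
            + b * ∑ k : Fin K, (cp * H k (y.1, y.2.2 k) + cop * H k (y.2.1, y.2.2 k)) := by
        rw [Finset.mul_sum, Finset.mul_sum, ← Finset.sum_add_distrib]
        refine Finset.sum_le_sum fun k _ => ?_
        have e1 : ((a * x.1 + b * y.1, a * x.2.2 k + b * y.2.2 k) : ℝ × ℝ)
            = a • ((x.1, x.2.2 k) : ℝ × ℝ) + b • ((y.1, y.2.2 k) : ℝ × ℝ) := by
          simp [Prod.ext_iff, smul_eq_mul]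
        have e2 : ((a * x.2.1 + b * y.2.1, a * x.2.2 k + b * y.2.2 k) : ℝ × ℝ)
            = a • ((x.2.1, x.2.2 k) : ℝ × ℝ) + b • ((y.2.1, y.2.2 k) : ℝ × ℝ) := by
          simp [Prod.ext_iff, smul_eq_mul]
        have i1 := (hH k).2 (mem_univ ((x.1, x.2.2 k) : ℝ × ℝ))
          (mem_univ ((y.1, y.2.2 k) : ℝ × ℝ)) ha.le hb.le hab
        have i2 := (hH k).2 (mem_univ ((x.2.1, x.2.2 k) : ℝ × ℝ))
          (mem_univ ((y.2.1, y.2.2 k) : ℝ × ℝ)) ha.le hb.le hab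
        rw [smul_eq_mul, smul_eq_mul] at i1 i2
        rw [e1, e2]
        have j1 := mul_le_mul_of_nonneg_left i1 hcp.le
        have j2 := mul_le_mul_of_nonneg_left i2 hcop.le
        linarith [j1, j2]
      have hsum2 : ∑ k : Fin K, Phi k (a * x.2.2 k + b * y.2.2 k)
          ≤ a * ∑ k : Fin K, Phi k (x.2.2 k) + b * ∑ k : Fin K, Phi k (y.2.2 k)
            - a * b * ∑ k : Fin K, m / 2 * (x.2.2 k - y.2.2 k) ^ 2 := by
        calc ∑ k : Fin K, Phi k (a * x.2.2 k + b * y.2.2 k)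
            ≤ ∑ k : Fin K, (a * Phi k (x.2.2 k) + b * Phi k (y.2.2 k)
                - a * b * (m / 2 * (x.2.2 k - y.2.2 k) ^ 2)) := by
              refine Finset.sum_le_sum fun k _ => ?_
              have i := (hPhi k).2 (mem_univ (x.2.2 k)) (mem_univ (y.2.2 k)) ha.le hb.le hab
              simp only [smul_eq_mul, Real.norm_eq_abs, sq_abs] at i
              linarith [i]
          _ = a * ∑ k : Fin K, Phi k (x.2.2 k) + b * ∑ k : Fin K, Phi k (y.2.2 k)
                - a * b * ∑ k : Fin K, m / 2 * (x.2.2 k - y.2.2 k) ^ 2 := by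
              rw [Finset.sum_sub_distrib, Finset.sum_add_distrib, Finset.mul_sum,
                Finset.mul_sum, Finset.mul_sum]
      have iG0p := hG0.2 (mem_univ x.1) (mem_univ y.1) ha.le hb.le hab
      have iG0q := hG0.2 (mem_univ x.2.1) (mem_univ y.2.1) ha.le hb.le hab
      simp only [smul_eq_mul, Real.norm_eq_abs, sq_abs] at iG0p iG0q
      have iG0p' := mul_le_mul_of_nonneg_left iG0p hcp.le
      have iG0q' := mul_le_mul_of_nonneg_left iG0q hcop.le
      rw [hG (a • x + b • y), hG x, hG y]
      simp only [hco1, hco2, hco3]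
      linarith [hsum1, hsum2, iG0p', iG0q']
    have hdiff : x.1 ≠ y.1 ∨ x.2.1 ≠ y.2.1 ∨ ∃ k, x.2.2 k ≠ y.2.2 k := by
      by_contra hc
      push_neg at hc
      exact hxy (Prod.ext hc.1 (Prod.ext hc.2.1 (funext hc.2.2)))
    have hsnn : (0:ℝ) ≤ ∑ k : Fin K, m / 2 * (x.2.2 k - y.2.2 k) ^ 2 :=
      Finset.sum_nonneg fun k _ => by positivity
    have hpos : 0 < cp * (m / 2 * (x.1 - y.1) ^ 2) + cop * (m / 2 * (x.2.1 - y.2.1) ^ 2)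
        + ∑ k : Fin K, m / 2 * (x.2.2 k - y.2.2 k) ^ 2 := by
      have t1 : (0:ℝ) ≤ cp * (m / 2 * (x.1 - y.1) ^ 2) := by positivity
      have t2 : (0:ℝ) ≤ cop * (m / 2 * (x.2.1 - y.2.1) ^ 2) := by positivity
      rcases hdiff with h | h | ⟨k, h⟩
      · have hne : x.1 - y.1 ≠ 0 := sub_ne_zero_of_ne h
        have : 0 < cp * (m / 2 * (x.1 - y.1) ^ 2) := by positivity
        linarith
      · have hne : x.2.1 - y.2.1 ≠ 0 := sub_ne_zero_of_ne h
        have : 0 < cop * (m / 2 * (x.2.1 - y.2.1) ^ 2) := by positivity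
        linarith
      · have hne : x.2.2 k - y.2.2 k ≠ 0 := sub_ne_zero_of_ne h
        have hk : 0 < m / 2 * (x.2.2 k - y.2.2 k) ^ 2 := by positivity
        have : 0 < ∑ j : Fin K, m / 2 * (x.2.2 j - y.2.2 j) ^ 2 :=
          Finset.sum_pos' (fun j _ => by positivity) ⟨k, Finset.mem_univ k, hk⟩
        linarith
    have hab' : 0 < a * b := mul_pos ha hb
    calc G (a • x + b • y) ≤ a * G x + b * G y - a * b * _ := key
      _ < a * G x + b * G y := by nlinarith
      _ = a • G x + b • G y := by simp [smul_eq_mul]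
  -- continuity of G
  have hGcont : Continuous G :=
    continuousOn_univ.1 ((hconv.convexOn).continuousOn isOpen_univ)
  -- existence via compact truncation
  obtain ⟨M, hM⟩ : ∃ M : ℝ, M = Real.sqrt (2 * C0 / m) + 1 := ⟨_, rfl⟩
  have hM0 : 0 ≤ M := by
    have := Real.sqrt_nonneg (2 * C0 / m); rw [hM]; linarith
  obtain ⟨T, hT⟩ : ∃ T : Set (ℝ × ℝ × (Fin K → ℝ)),
      T = Icc (0:ℝ) Pstar ×ˢ Icc (0:ℝ) Pstar ×ˢ Icc (0 : Fin K → ℝ) (fun _ => M) :=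
    ⟨_, rfl⟩
  have hTcomp : IsCompact T := by
    rw [hT]; exact isCompact_Icc.prod (isCompact_Icc.prod isCompact_Icc)
  have hTS : T ⊆ Icc (0:ℝ) Pstar ×ˢ Icc (0:ℝ) Pstar ×ˢ {r : Fin K → ℝ | ∀ k, 0 ≤ r k} := by
    rw [hT]
    rintro ⟨p, q, r⟩ ⟨hp, hq, hr⟩
    exact ⟨hp, hq, fun k => hr.1 k⟩
  have hz0T : ((0:ℝ), (0:ℝ), (fun _ => (0:ℝ))) ∈ T := by
    rw [hT]
    refine ⟨⟨le_rfl, hPstar.le⟩, ⟨le_rfl, hPstar.le⟩, ?_, ?_⟩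
    · intro k; exact le_rfl
    · intro k; exact hM0
  have hz0S : ((0:ℝ), (0:ℝ), (fun _ => (0:ℝ)))
      ∈ Icc (0:ℝ) Pstar ×ˢ Icc (0:ℝ) Pstar ×ˢ {r : Fin K → ℝ | ∀ k, 0 ≤ r k} :=
    hTS hz0T
  obtain ⟨w, hwT, hwmin⟩ := hTcomp.exists_isMinOn ⟨_, hz0T⟩ hGcont.continuousOn
  have hwS := hTS hwT
  have hwminS : IsMinOn G (Icc (0:ℝ) Pstar ×ˢ Icc (0:ℝ) Pstar ×ˢ
      {r : Fin K → ℝ | ∀ k, 0 ≤ r k}) w := by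
    rw [isMinOn_iff]
    intro z hz
    by_cases hcase : ∀ k, z.2.2 k ≤ M
    · refine isMinOn_iff.1 hwmin z ?_
      rw [hT]
      refine ⟨hz.1, hz.2.1, ?_, ?_⟩
      · intro k; exact hz.2.2 k
      · intro k; exact hcase k
    · push_neg at hcase
      obtain ⟨k, hk⟩ := hcase
      have h1 := LB z hz k
      have hrk0 : 0 ≤ z.2.2 k := hz.2.2 k
      have hsq : Real.sqrt (2 * C0 / m) ^ 2 = 2 * C0 / m := Real.sq_sqrt (by positivity)
      have hbig : C0 < m / 2 * (z.2.2 k) ^ 2 := by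
        have hs0 := Real.sqrt_nonneg (2 * C0 / m)
        have hMz : M ≤ z.2.2 k := hk.le
        have hzz : M ^ 2 ≤ (z.2.2 k) ^ 2 := by nlinarith
        have hM2 : 2 * C0 / m < M ^ 2 := by rw [hM]; nlinarith
        have hlt : 2 * C0 / m < (z.2.2 k) ^ 2 := lt_of_lt_of_le hM2 hzz
        rw [div_lt_iff₀ hm] at hlt
        linarith
      have hw0 : G w ≤ G ((0:ℝ), (0:ℝ), (fun _ => (0:ℝ))) := isMinOn_iff.1 hwmin _ hz0T
      have hGz0 : G ((0:ℝ), (0:ℝ), (fun _ => (0:ℝ))) = C0 - Pstar * (cp * dp + cop * dop) := by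
        rw [hC0]; ring
      linarith
  -- convexity of S
  have hSconv : Convex ℝ (Icc (0:ℝ) Pstar ×ˢ Icc (0:ℝ) Pstar ×ˢ
      {r : Fin K → ℝ | ∀ k, 0 ≤ r k}) := by
    refine (convex_Icc _ _).prod ((convex_Icc _ _).prod ?_)
    intro u hu v hv a b ha hb hab k
    have huv : (a • u + b • v) k = a * u k + b * v k := by simp [smul_eq_mul]
    rw [huv]
    exact add_nonneg (mul_nonneg ha (hu k)) (mul_nonneg hb (hv k))
  have hstrictS := hconv.subset (subset_univ _) hSconv
  constructor
  · exact ⟨w, ⟨hwS, hwminS⟩, fun y hy => hstrictS.eq_of_isMinOn hy.2 hwminS hy.1 hwS⟩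
  · intro z hzS hzmin k
    have h1 := LB z hzS k
    have h2 : G z ≤ G ((0:ℝ), (0:ℝ), (fun _ => (0:ℝ))) := isMinOn_iff.1 hzmin _ hz0S
    have h3 : m / 2 * (z.2.2 k) ^ 2 ≤ C0 := by rw [hC0]; linarith
    have hr0 : 0 ≤ z.2.2 k := hzS.2.2 k
    rw [← hC0]
    rw [Real.le_sqrt hr0 (by positivity)]
    rw [le_div_iff₀ hm]
    linarith
end
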